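/- Every row-stochastic m × m real matrix W with m ≥ 1 admits a stationary distribution: there exists a vector π : Fin m → ℝ with π i ≥ 0 for all i, ∑_i π i = 1, and ∑_i π i · W i j = π j for every j (i.e. πᵀ W = πᵀ). -/

import Mathlib

set_option maxHeartbeats 1000000 in
theorem exists_stationary_distribution
    (m : ℕ) (hm : 1 ≤ m) (W : Matrix (Fin m) (Fin m) ℝ)
    (hnonneg : ∀ i j, 0 ≤ W i j) (hrow : ∀ i, ∑ j, W i j = 1) :
    ∃ π : Fin m → ℝ, (∀ i, 0 ≤ π i) ∧ (∑ i, π i = 1) ∧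
      (∀ j, ∑ i, π i * W i j = π j) := by
  set f : (Fin m → ℝ) → (Fin m → ℝ) := fun π j => ∑ i, π i * W i j with hfdef
  have hfmem : ∀ π ∈ stdSimplex ℝ (Fin m), f π ∈ stdSimplex ℝ (Fin m) := by
    rintro π ⟨h1, h2⟩
    refine ⟨fun j => Finset.sum_nonneg fun i _ => mul_nonneg (h1 i) (hnonneg i j), ?_⟩
    show ∑ j, ∑ i, π i * W i j = 1
    rw [Finset.sum_comm]
    simp_rw [← Finset.mul_sum, hrow, mul_one]
    exact h2
  have hcont : Continuous f := continuous_pi fun j =>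
    continuous_finset_sum _ fun i _ => (continuous_apply i).mul continuous_const
  have hm0 : (0:ℝ) < m := by exact_mod_cast hm
  set u : ℕ → Fin m → ℝ := fun k => f^[k] (fun _ => (m:ℝ)⁻¹) with hudef
  have hu0 : u 0 ∈ stdSimplex ℝ (Fin m) := by
    refine ⟨fun i => by show (0:ℝ) ≤ (m:ℝ)⁻¹; positivity, ?_⟩
    show ∑ _i : Fin m, (m:ℝ)⁻¹ = 1
    rw [Finset.sum_const, Finset.card_fin, nsmul_eq_mul]
    field_simp
  have humem : ∀ k, u k ∈ stdSimplex ℝ (Fin m) := by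
    intro k
    induction k with
    | zero => exact hu0
    | succ n ih =>
        have : u (n+1) = f (u n) := Function.iterate_succ_apply' f n _
        rw [this]; exact hfmem _ ih
  have husucc : ∀ k, u (k+1) = f (u k) := fun k => Function.iterate_succ_apply' f k _
  set a : ℕ → Fin m → ℝ := fun n j => ((n:ℝ))⁻¹ * ∑ k ∈ Finset.range n, u k j with hadef
  have hamem : ∀ n : ℕ, a (n+1) ∈ stdSimplex ℝ (Fin m) := by
    intro n
    refine ⟨fun j => mul_nonneg (by positivity) (Finset.sum_nonneg fun k _ => (humem k).1 j), ?_⟩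
    show ∑ j, ((n+1:ℕ):ℝ)⁻¹ * ∑ k ∈ Finset.range (n+1), u k j = 1
    rw [← Finset.mul_sum, Finset.sum_comm]
    have : ∑ k ∈ Finset.range (n+1), ∑ j, u k j = (n+1 : ℕ) := by
      rw [Finset.sum_congr rfl fun k _ => (humem k).2]
      simp
    rw [this]
    have : ((n:ℝ)+1) ≠ 0 := by positivity
    field_simp
  -- key identity
  have hkey : ∀ (n : ℕ) (j : Fin m),
      f (a n) j = a n j + ((n:ℝ))⁻¹ * (u n j - u 0 j) := by
    intro n j
    have h1 : f (a n) j = ((n:ℝ))⁻¹ * ∑ k ∈ Finset.range n, u (k+1) j := by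
      show ∑ i, (((n:ℝ))⁻¹ * ∑ k ∈ Finset.range n, u k i) * W i j = _
      simp_rw [mul_assoc, ← Finset.mul_sum]
      congr 1
      simp_rw [Finset.sum_mul]
      rw [Finset.sum_comm]
      refine Finset.sum_congr rfl fun k _ => ?_
      rw [husucc k]
    have h2 : ∑ k ∈ Finset.range n, u (k+1) j
        = (∑ k ∈ Finset.range n, u k j) + (u n j - u 0 j) := by
      have := Finset.sum_range_succ' (fun k => u k j) n
      have h3 := Finset.sum_range_succ (fun k => u k j) n
      -- sum_range_succ' : ∑_{i<n+1} = (∑_{i<n} g (i+1)) + g 0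
      linarith [this, h3]
    rw [h1, h2, mul_add]
  -- compactness: convergent subsequence
  obtain ⟨π, hπ, φ, hφ, hconv⟩ :=
    (isCompact_stdSimplex ℝ (Fin m)).tendsto_subseq (x := fun n => a (n+1)) hamem
  -- the error term tends to 0
  have hbound : ∀ (k : ℕ) (j : Fin m), |u k j - u 0 j| ≤ 1 := by
    intro k j
    have h1 : u k j ≤ 1 := by
      calc u k j ≤ ∑ i, u k i :=
        Finset.single_le_sum (fun i _ => (humem k).1 i) (Finset.mem_univ j)
      _ = 1 := (humem k).2
    have h2 : u 0 j ≤ 1 := by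
      calc u 0 j ≤ ∑ i, u 0 i :=
        Finset.single_le_sum (fun i _ => (humem 0).1 i) (Finset.mem_univ j)
      _ = 1 := (humem 0).2
    have := (humem k).1 j
    have := (humem 0).1 j
    rw [abs_le]; constructor <;> linarith
  have htopinv : Filter.Tendsto (fun n => (((φ n + 1 : ℕ)):ℝ)⁻¹) Filter.atTop (nhds 0) := by
    apply Filter.Tendsto.comp tendsto_inv_atTop_zero
    apply Filter.Tendsto.comp tendsto_natCast_atTop_atTop
    exact Filter.tendsto_atTop_mono (fun n => Nat.le_succ (φ n)) hφ.tendsto_atTop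
  have herr : Filter.Tendsto
      (fun n => (fun j => (((φ n + 1 : ℕ)):ℝ)⁻¹ * (u (φ n + 1) j - u 0 j)))
      Filter.atTop (nhds 0) := by
    rw [tendsto_pi_nhds]
    intro j
    apply squeeze_zero_norm (fun n => ?_) htopinv
    have h1 : (0:ℝ) ≤ (((φ n + 1 : ℕ)):ℝ)⁻¹ := by positivity
    calc ‖(((φ n + 1 : ℕ)):ℝ)⁻¹ * (u (φ n + 1) j - u 0 j)‖
        = (((φ n + 1 : ℕ)):ℝ)⁻¹ * |u (φ n + 1) j - u 0 j| := by
          rw [Real.norm_eq_abs, abs_mul, abs_of_nonneg h1]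
      _ ≤ (((φ n + 1 : ℕ)):ℝ)⁻¹ * 1 := by
          exact mul_le_mul_of_nonneg_left (hbound _ j) h1
      _ = (((φ n + 1 : ℕ)):ℝ)⁻¹ := mul_one _
  -- f (a (φ n + 1)) tends to π
  have heq : ∀ n, f (a (φ n + 1)) = (fun j => a (φ n + 1) j
      + (((φ n + 1 : ℕ)):ℝ)⁻¹ * (u (φ n + 1) j - u 0 j)) := by
    intro n; funext j; exact hkey (φ n + 1) j
  have htend1 : Filter.Tendsto (fun n => f (a (φ n + 1))) Filter.atTop (nhds π) := by
    simp_rw [heq]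
    have := hconv.add herr
    rw [add_zero] at this; exact this
  have htend2 : Filter.Tendsto (fun n => f (a (φ n + 1))) Filter.atTop (nhds (f π)) :=
    (hcont.tendsto π).comp hconv
  have hfix : f π = π := tendsto_nhds_unique htend2 htend1
  exact ⟨π, hπ.1, hπ.2, fun j => congrFun hfix j⟩
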